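/- Let m ∈ ℕ, let p_0, …, p_{2^m−1} ∈ [0,1) with ∑_{k=0}^{2^m−1} p_k = 1, and for k ∈ {0,…,2^m−1} let f_k : [0,1] → [0,1] be given by f_k(x) = (x+k)/2^m. Let μ be a Borel probability measure on [0,1] satisfying μ(B) = ∑_{k=0}^{2^m−1} p_k · μ(f_k^{-1}(B)) for every Borel set B ⊆ [0,1]. Then μ({x}) = 0 for every x ∈ [0,1]; in particular, the probability distribution function Φ : [0,1] → [0,1] defined by Φ(x) = μ([0,x]) is continuous. -/

import Mathlib

open MeasureTheory

/-- Auxiliary: a probability measure on ℝ supported in `[0,1]` which satisfies the IFS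
invariance has no atoms anywhere. -/
theorem stmt_8_aux (m : ℕ) (hm : 1 ≤ m) (p : ℕ → ℝ)
    (hp : ∀ k < 2 ^ m, p k ∈ Set.Ico (0:ℝ) 1)
    (hsum : ∑ k ∈ Finset.range (2 ^ m), p k = 1)
    (μ : Measure ℝ) [IsProbabilityMeasure μ] (hμ : μ (Set.Icc (0:ℝ) 1) = 1)
    (hinv : ∀ B ⊆ Set.Icc (0:ℝ) 1, MeasurableSet B →
      μ B = ∑ k ∈ Finset.range (2 ^ m),
        ENNReal.ofReal (p k) * μ ((fun x : ℝ => (x + k) / 2 ^ m) ⁻¹' B)) :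
    ∀ x : ℝ, μ {x} = 0 := by
  classical
  have h2m : (0:ℝ) < 2 ^ m := by positivity
  -- the complement of [0,1] is null
  have hcompl : μ (Set.Icc (0:ℝ) 1)ᶜ = 0 := by
    rw [measure_compl measurableSet_Icc (measure_ne_top μ _), hμ, measure_univ, tsub_self]
  have hout : ∀ x : ℝ, x ∉ Set.Icc (0:ℝ) 1 → μ {x} = 0 := by
    intro x hx
    exact measure_mono_null (by simpa using hx) hcompl
  -- singleton invariance
  have hsing : ∀ x ∈ Set.Icc (0:ℝ) 1,
      μ {x} = ∑ k ∈ Finset.range (2 ^ m),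
        ENNReal.ofReal (p k) * μ {2 ^ m * x - (k:ℝ)} := by
    intro x hx
    have := hinv {x} (by simpa using hx) (measurableSet_singleton x)
    rw [this]
    refine Finset.sum_congr rfl fun k _ => ?_
    congr 1
    congr 1
    ext y
    simp only [Set.mem_preimage, Set.mem_singleton_iff]
    rw [div_eq_iff (ne_of_gt h2m)]
    constructor <;> intro h <;> linarith
  by_contra hcon
  push_neg at hcon
  obtain ⟨x₀, hx₀⟩ := hcon
  -- the supremum of atom sizes
  set a : ENNReal := ⨆ x : ℝ, μ {x} with ha
  have ha_le : ∀ x : ℝ, μ {x} ≤ a := fun x => le_iSup (fun x : ℝ => μ {x}) x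
  have ha_pos : 0 < a := lt_of_lt_of_le (pos_iff_ne_zero.mpr hx₀) (ha_le x₀)
  have ha_le1 : a ≤ 1 := by
    refine iSup_le fun x => ?_
    simpa using prob_le_one (μ := μ) (s := {x})
  have ha_ne_top : a ≠ ⊤ := ne_top_of_le_ne_top ENNReal.one_ne_top ha_le1
  -- the set of atoms of size ≥ a/2 is finite
  have hTfin : Set.Finite {x : ℝ | a / 2 ≤ μ {x}} := by
    refine Measure.finite_const_le_meas_of_disjoint_iUnion μ
      (ε := a / 2) (ENNReal.half_pos ha_pos.ne') (As := fun x : ℝ => {x})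
      (fun x => measurableSet_singleton x) ?_ ?_
    · intro i j hij
      simpa [Function.onFun] using hij
    · exact ne_top_of_le_ne_top (measure_ne_top μ _) (measure_mono (Set.subset_univ _))
  -- the supremum is attained
  have hattain : ∃ x : ℝ, μ {x} = a := by
    have hhalf : a / 2 < a := ENNReal.half_lt_self ha_pos.ne' ha_ne_top
    obtain ⟨x₁, hx₁⟩ : ∃ x : ℝ, a / 2 < μ {x} := by
      by_contra h
      push_neg at h
      exact absurd (iSup_le h) (not_le.mpr hhalf)
    have hne : {x : ℝ | a / 2 ≤ μ {x}}.Nonempty := ⟨x₁, le_of_lt hx₁⟩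
    obtain ⟨x₂, hx₂mem, hx₂max⟩ :=
      Set.exists_max_image _ (fun x : ℝ => μ {x}) hTfin hne
    refine ⟨x₂, le_antisymm (ha_le x₂) ?_⟩
    refine iSup_le fun x => ?_
    by_cases hx : a / 2 ≤ μ {x}
    · exact hx₂max x hx
    · exact (le_of_not_ge hx).trans hx₂mem
  obtain ⟨x_at, hx_at⟩ := hattain
  -- the set of maximal atoms
  set S : Set ℝ := {x : ℝ | μ {x} = a} with hS
  have hSsub : S ⊆ {x : ℝ | a / 2 ≤ μ {x}} := by
    intro x hx
    simp only [hS, Set.mem_setOf_eq] at hx ⊢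
    rw [hx]
    exact ENNReal.half_le_self
  have hSfin : S.Finite := hTfin.subset hSsub
  have hSne : S.Nonempty := ⟨x_at, hx_at⟩
  have hSIcc : S ⊆ Set.Icc (0:ℝ) 1 := by
    intro x hx
    by_contra hxI
    have : μ {x} = 0 := hout x hxI
    rw [hS, Set.mem_setOf_eq, this] at hx
    exact ha_pos.ne (by rw [hx])
  -- closure of S under the inverse branches with positive probability
  have hclose : ∀ x ∈ S, ∀ j < 2 ^ m, 0 < p j → (2 ^ m * x - (j:ℝ)) ∈ S := by
    intro x hxS j hj hpj
    have hxmem : x ∈ Set.Icc (0:ℝ) 1 := hSIcc hxS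
    have heq := hsing x hxmem
    have hxa : μ {x} = a := hxS
    -- pass to real numbers
    set q : ℕ → ℝ := fun k => (μ {2 ^ m * x - (k:ℝ)}).toReal with hq
    set r : ℝ := a.toReal with hr
    have hterm_ne : ∀ k ∈ Finset.range (2 ^ m),
        ENNReal.ofReal (p k) * μ {2 ^ m * x - (k:ℝ)} ≠ ⊤ :=
      fun k _ => ENNReal.mul_ne_top ENNReal.ofReal_ne_top (measure_ne_top μ _)
    have hreal : r = ∑ k ∈ Finset.range (2 ^ m), p k * q k := by
      have := congrArg ENNReal.toReal heq
      rw [hxa, ENNReal.toReal_sum hterm_ne] at this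
      rw [hr, this]
      refine Finset.sum_congr rfl fun k hk => ?_
      rw [ENNReal.toReal_mul, ENNReal.toReal_ofReal (hp k (Finset.mem_range.mp hk)).1]
    have hqle : ∀ k, q k ≤ r := by
      intro k
      exact ENNReal.toReal_mono ha_ne_top (ha_le _)
    -- each branch with positive probability attains the maximum
    have hqj : q j = r := by
      by_contra hqj
      have hlt : q j < r := lt_of_le_of_ne (hqle j) hqj
      have : ∑ k ∈ Finset.range (2 ^ m), p k * q k
          < ∑ k ∈ Finset.range (2 ^ m), p k * r := by
        refine Finset.sum_lt_sum (fun k hk => ?_) ⟨j, Finset.mem_range.mpr hj, ?_⟩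
        · exact mul_le_mul_of_nonneg_left (hqle k) (hp k (Finset.mem_range.mp hk)).1
        · exact mul_lt_mul_of_pos_left hlt hpj
      rw [← Finset.sum_mul, hsum, one_mul] at this
      exact absurd (hreal ▸ this) (lt_irrefl r)
    have : μ {2 ^ m * x - (j:ℝ)} = a := by
      rw [← ENNReal.toReal_eq_toReal_iff' (measure_ne_top μ _) ha_ne_top]
      exact hqj
    exact this
  -- two distinct branches with positive probability
  obtain ⟨k₀, hk₀, k₁, hk₁, hk01, hpk₀, hpk₁⟩ :
      ∃ k₀ < 2 ^ m, ∃ k₁ < 2 ^ m, k₀ < k₁ ∧ 0 < p k₀ ∧ 0 < p k₁ := by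
    obtain ⟨i, hi, hpi⟩ : ∃ i ∈ Finset.range (2 ^ m), 0 < p i := by
      by_contra h
      push_neg at h
      have : ∑ k ∈ Finset.range (2 ^ m), p k = 0 := by
        refine Finset.sum_eq_zero fun k hk => ?_
        exact le_antisymm (h k hk) (hp k (Finset.mem_range.mp hk)).1
      rw [this] at hsum; norm_num at hsum
    obtain ⟨i', hi', hii', hpi'⟩ : ∃ i' ∈ Finset.range (2 ^ m), i' ≠ i ∧ 0 < p i' := by
      by_contra h
      push_neg at h
      have : ∑ k ∈ Finset.range (2 ^ m), p k = p i := by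
        refine Finset.sum_eq_single_of_mem i hi fun k hk hki => ?_
        exact le_antisymm (h k hk hki) (hp k (Finset.mem_range.mp hk)).1
      rw [this] at hsum
      exact absurd hsum (ne_of_lt (hp i (Finset.mem_range.mp hi)).2)
    rcases lt_or_gt_of_ne hii' with hlt | hgt
    · exact ⟨i', Finset.mem_range.mp hi', i, Finset.mem_range.mp hi, hlt, hpi', hpi⟩
    · exact ⟨i, Finset.mem_range.mp hi, i', Finset.mem_range.mp hi', hgt, hpi, hpi'⟩
  -- extremes of S
  have hSne' : hSfin.toFinset.Nonempty := by
    rwa [Set.Finite.toFinset_nonempty]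
  set xmin : ℝ := hSfin.toFinset.min' hSne' with hxmin
  set xmax : ℝ := hSfin.toFinset.max' hSne' with hxmax
  have hxminS : xmin ∈ S := by
    have := hSfin.toFinset.min'_mem hSne'
    rwa [Set.Finite.mem_toFinset] at this
  have hxmaxS : xmax ∈ S := by
    have := hSfin.toFinset.max'_mem hSne'
    rwa [Set.Finite.mem_toFinset] at this
  have hminle : ∀ y ∈ S, xmin ≤ y := fun y hy =>
    hSfin.toFinset.min'_le y (hSfin.mem_toFinset.mpr hy)
  have hlemax : ∀ y ∈ S, y ≤ xmax := fun y hy =>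
    hSfin.toFinset.le_max' y (hSfin.mem_toFinset.mpr hy)
  -- derive the contradiction
  have h1 : (2:ℝ) ^ m * xmax - (k₀:ℝ) ≤ xmax :=
    hlemax _ (hclose xmax hxmaxS k₀ hk₀ hpk₀)
  have h2 : xmin ≤ 2 ^ m * xmin - (k₁:ℝ) :=
    hminle _ (hclose xmin hxminS k₁ hk₁ hpk₁)
  have hminmax : xmin ≤ xmax := hlemax _ hxminS
  have hcast : (k₀:ℝ) + 1 ≤ (k₁:ℝ) := by exact_mod_cast Nat.succ_le_of_lt hk01
  have h2m2 : (2:ℝ) ≤ 2 ^ m := by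
    calc (2:ℝ) = 2 ^ 1 := (pow_one 2).symm
    _ ≤ 2 ^ m := pow_le_pow_right₀ (by norm_num) hm
  nlinarith [mul_le_mul_of_nonneg_left hminmax (by linarith : (0:ℝ) ≤ 2 ^ m - 1)]

/-- If `μ` is a Borel probability measure on `[0,1]` invariant for the IFS
`f_k(x) = (x+k)/2^m`, `k = 0,…,2^m−1`, with probabilities `p_k ∈ [0,1)` summing to `1`,
then `μ({x}) = 0` for every `x ∈ [0,1]`; in particular the distribution function
`Φ(x) = μ([0,x])` is continuous on `[0,1]`. -/
theorem stmt_8 (m : ℕ) (hm : 1 ≤ m) (p : ℕ → ℝ)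
    (hp : ∀ k < 2 ^ m, p k ∈ Set.Ico (0:ℝ) 1)
    (hsum : ∑ k ∈ Finset.range (2 ^ m), p k = 1)
    (μ : Measure ℝ) [IsProbabilityMeasure μ] (hμ : μ (Set.Icc (0:ℝ) 1) = 1)
    (hinv : ∀ B ⊆ Set.Icc (0:ℝ) 1, MeasurableSet B →
      μ B = ∑ k ∈ Finset.range (2 ^ m),
        ENNReal.ofReal (p k) * μ ((fun x : ℝ => (x + k) / 2 ^ m) ⁻¹' B)) :
    (∀ x ∈ Set.Icc (0:ℝ) 1, μ {x} = 0) ∧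
    ContinuousOn (fun x : ℝ => (μ (Set.Icc 0 x)).toReal) (Set.Icc (0:ℝ) 1) := by
  have hno := stmt_8_aux m hm p hp hsum μ hμ hinv
  refine ⟨fun x _ => hno x, ?_⟩
  -- below 0 there is no mass
  have hcompl : μ (Set.Icc (0:ℝ) 1)ᶜ = 0 := by
    rw [measure_compl measurableSet_Icc (measure_ne_top μ _), hμ, measure_univ, tsub_self]
  have hIio : μ (Set.Iio (0:ℝ)) = 0 := by
    refine measure_mono_null (fun y hy => ?_) hcompl
    simp only [Set.mem_Iio] at hy
    simp only [Set.mem_compl_iff, Set.mem_Icc, not_and_or, not_le]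
    exact Or.inl hy
  -- on [0,1], μ (Icc 0 x) = μ (Iic x)
  have hEq : ∀ x : ℝ, 0 ≤ x → μ (Set.Icc 0 x) = μ (Set.Iic x) := by
    intro x _
    refine le_antisymm (measure_mono Set.Icc_subset_Iic_self) ?_
    have hsub : Set.Iic x ⊆ Set.Iio 0 ∪ Set.Icc 0 x := by
      intro y hy
      simp only [Set.mem_Iic] at hy
      rcases lt_or_ge y 0 with h | h
      · exact Or.inl h
      · exact Or.inr ⟨h, hy⟩
    calc μ (Set.Iic x) ≤ μ (Set.Iio 0 ∪ Set.Icc 0 x) := measure_mono hsub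
      _ ≤ μ (Set.Iio 0) + μ (Set.Icc 0 x) := measure_union_le _ _
      _ = μ (Set.Icc 0 x) := by rw [hIio, zero_add]
  -- the cdf is continuous
  set F := ProbabilityTheory.cdf μ with hF
  have hFcont : ∀ x : ℝ, ContinuousAt F x := by
    intro x
    have hmono : Monotone F := F.mono
    have hleft : Function.leftLim F x = F x := by
      have h0 : F.measure {x} = 0 := by
        rw [ProbabilityTheory.measure_cdf]
        exact hno x
      rw [StieltjesFunction.measure_singleton] at h0
      have hle : Function.leftLim F x ≤ F x := hmono.leftLim_le le_rfl
      have hge : F x ≤ Function.leftLim F x := by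
        by_contra hlt
        push_neg at hlt
        rw [ENNReal.ofReal_eq_zero] at h0
        linarith
      exact le_antisymm hle hge
    have hright : Function.rightLim F x = F x := by
      refine rightLim_eq_of_tendsto ?_
      exact (F.right_continuous x).tendsto.mono_left
        (nhdsWithin_mono x Set.Ioi_subset_Ici_self)
    rw [hmono.continuousAt_iff_leftLim_eq_rightLim, hleft, hright]
  refine ContinuousOn.congr (Continuous.continuousOn (continuous_iff_continuousAt.mpr hFcont))
    (fun x hx => ?_)
  rw [hEq x hx.1, hF, ProbabilityTheory.cdf_eq_real, measureReal_def]
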